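/- For positive integers d and n, the number M_d(n) of (n, dn+1)-core partitions with distinct parts satisfies M_d(-1)=0, M_d(0)=1, and M_d(n)=M_d(n-1)+d·M_d(n-2) for n ≥ 1. -/

import Mathlib

def hook (Y : YoungDiagram) (i j : ℕ) : ℕ :=
  (Y.rowLen i - j) + (Y.colLen j - i) - 1

def IsCore (Y : YoungDiagram) (t : ℕ) : Prop :=
  ∀ c ∈ Y.cells, ¬ (t ∣ hook Y c.1 c.2)

def DistinctParts (Y : YoungDiagram) : Prop :=
  ∀ i : ℕ, 0 < Y.rowLen (i + 1) → Y.rowLen (i + 1) < Y.rowLen i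

def betaSet (Y : YoungDiagram) : Finset ℕ :=
  (Finset.range (Y.colLen 0)).image (fun i => Y.rowLen i + (Y.colLen 0 - 1 - i))

noncomputable def Mcount (d n : ℕ) : ℕ :=
  {Y : YoungDiagram | DistinctParts Y ∧ IsCore Y n ∧ IsCore Y (d * n + 1)}.ncard

namespace NS

def beta (Y : YoungDiagram) (i : ℕ) : ℕ := Y.rowLen i + (Y.colLen 0 - 1 - i)

lemma betaSet_eq (Y : YoungDiagram) :
    betaSet Y = (Finset.range (Y.colLen 0)).image (beta Y) := rfl

lemma mem_betaSet {Y : YoungDiagram} {x : ℕ} :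
    x ∈ betaSet Y ↔ ∃ i < Y.colLen 0, beta Y i = x := by
  simp [betaSet_eq]

lemma rowLen_pos_iff (Y : YoungDiagram) (i : ℕ) :
    0 < Y.rowLen i ↔ i < Y.colLen 0 := by
  rw [← YoungDiagram.mem_iff_lt_rowLen, YoungDiagram.mem_iff_lt_colLen]

lemma colLen_le (Y : YoungDiagram) (j : ℕ) : Y.colLen j ≤ Y.colLen 0 :=
  Y.colLen_anti 0 j (Nat.zero_le _)

lemma beta_lt {Y : YoungDiagram} {i1 i2 : ℕ} (h : i1 < i2) (h2 : i2 < Y.colLen 0) :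
    beta Y i2 < beta Y i1 := by
  have := Y.rowLen_anti i1 i2 h.le
  unfold beta; omega

/-- the complement enumeration -/
def xval (Y : YoungDiagram) (j : ℕ) : ℕ := j + (Y.colLen 0 - Y.colLen j)

lemma xval_zero (Y : YoungDiagram) : xval Y 0 = 0 := by simp [xval]

lemma xval_strictMono (Y : YoungDiagram) : StrictMono (xval Y) := by
  apply strictMono_nat_of_lt_succ
  intro j
  have h1 := Y.colLen_anti j (j+1) (Nat.le_succ j)
  have h2 := colLen_le Y j
  have h3 := colLen_le Y (j+1)
  unfold xval; omega

lemma beta_eq_hook_add_xval {Y : YoungDiagram} {i j : ℕ} (h : (i, j) ∈ Y) :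
    beta Y i = hook Y i j + xval Y j := by
  have h1 : j < Y.rowLen i := YoungDiagram.mem_iff_lt_rowLen.mp h
  have h2 : i < Y.colLen j := YoungDiagram.mem_iff_lt_colLen.mp h
  have h3 := colLen_le Y j
  unfold beta hook xval; omega

lemma hook_pos {Y : YoungDiagram} {i j : ℕ} (h : (i, j) ∈ Y) : 0 < hook Y i j := by
  have h1 : j < Y.rowLen i := YoungDiagram.mem_iff_lt_rowLen.mp h
  have h2 : i < Y.colLen j := YoungDiagram.mem_iff_lt_colLen.mp h
  unfold hook; omega

lemma xval_not_mem (Y : YoungDiagram) (j : ℕ) : xval Y j ∉ betaSet Y := by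
  rw [mem_betaSet]
  rintro ⟨i, hik, hbx⟩
  have h3 := colLen_le Y j
  have key : Y.rowLen i + Y.colLen j = j + i + 1 := by unfold beta xval at hbx; omega
  by_cases hmem : (i, j) ∈ Y
  · have h1 : j < Y.rowLen i := YoungDiagram.mem_iff_lt_rowLen.mp hmem
    have h2 : i < Y.colLen j := YoungDiagram.mem_iff_lt_colLen.mp hmem
    omega
  · have h1 : ¬ j < Y.rowLen i := fun hc => hmem (YoungDiagram.mem_iff_lt_rowLen.mpr hc)
    have h2 : ¬ i < Y.colLen j := fun hc => hmem (YoungDiagram.mem_iff_lt_colLen.mpr hc)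
    omega

lemma zero_not_mem_betaSet (Y : YoungDiagram) : 0 ∉ betaSet Y := by
  rw [mem_betaSet]
  rintro ⟨i, hik, hbx⟩
  have : 0 < Y.rowLen i := (rowLen_pos_iff Y i).mpr hik
  unfold beta at hbx; omega

/-- surjectivity of xval onto the complement below beta i -/
lemma exists_xval {Y : YoungDiagram} {i x : ℕ} (hik : i < Y.colLen 0)
    (hx : x < beta Y i) (hxB : x ∉ betaSet Y) :
    ∃ j < Y.rowLen i, xval Y j = x := by
  classical
  set P : ℕ → Prop := fun j => xval Y j ≤ x with hP
  set j := Nat.findGreatest P x with hj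
  have hj0 : P 0 := by simp [hP, xval_zero]
  have hjle : xval Y j ≤ x := Nat.findGreatest_spec (P := P) (Nat.zero_le x) hj0
  have hjsucc : ¬ xval Y (j+1) ≤ x := by
    intro hc
    have hle : j + 1 ≤ x := le_trans (by
      have : j + 1 ≤ xval Y (j+1) := by unfold xval; omega
      exact this) hc
    have := Nat.le_findGreatest (P := P) hle hc
    omega
  -- x = xval Y j
  have hxeq : xval Y j = x := by
    by_contra hne
    -- then x ∈ betaSet
    have hr : xval Y j < x := lt_of_le_of_ne hjle hne
    set r := x - xval Y j with hrdef
    have hrange : r ≥ 1 ∧ xval Y j + r = x := by omega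
    have hub : xval Y j + r < xval Y (j+1) := by omega
    have hcol : Y.colLen (j+1) + r ≤ Y.colLen j := by
      have h3 := colLen_le Y j
      have h4 := colLen_le Y (j+1)
      unfold xval at hub; omega
    set i' := Y.colLen j - r with hi'
    have hi'lt : i' < Y.colLen j := by omega
    have hmem : (i', j) ∈ Y := YoungDiagram.mem_iff_lt_colLen.mpr hi'lt
    have hrow1 : j < Y.rowLen i' := YoungDiagram.mem_iff_lt_rowLen.mp hmem
    have hnmem : (i', j+1) ∉ Y := by
      intro hc
      have := YoungDiagram.mem_iff_lt_colLen.mp hc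
      omega
    have hrow2 : ¬ j + 1 < Y.rowLen i' := fun hc =>
      hnmem (YoungDiagram.mem_iff_lt_rowLen.mpr hc)
    have hrl : Y.rowLen i' = j + 1 := by omega
    have : beta Y i' = x := by
      have h3 := colLen_le Y j
      unfold beta; rw [hrl]
      unfold xval at hrange; omega
    exact hxB (mem_betaSet.mpr ⟨i', by have := colLen_le Y j; omega, this⟩)
  refine ⟨j, ?_, hxeq⟩
  -- j < rowLen i
  by_contra hc
  push_neg at hc
  have hnm : (i, Y.rowLen i) ∉ Y := by
    rw [YoungDiagram.mem_iff_lt_rowLen]; omega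
  have hcl : Y.colLen (Y.rowLen i) ≤ i := by
    by_contra hcc
    push_neg at hcc
    exact hnm (YoungDiagram.mem_iff_lt_colLen.mpr hcc)
  have h1 : beta Y i < xval Y (Y.rowLen i) := by
    have hik' := hik
    unfold beta xval; omega
  have h2 : xval Y (Y.rowLen i) ≤ xval Y j := (xval_strictMono Y).le_iff_le.mpr hc
  omega

def NoTwoConsec (B : Finset ℕ) : Prop := ∀ x, x ∈ B → x + 1 ∉ B

def Closed (B : Finset ℕ) (t : ℕ) : Prop := ∀ x ∈ B, t ≤ x → x - t ∈ B

lemma isCore_iff_closed {Y : YoungDiagram} {t : ℕ} (ht : 1 ≤ t) :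
    IsCore Y t ↔ Closed (betaSet Y) t := by
  constructor
  · intro hcore b hb htb
    rcases mem_betaSet.mp hb with ⟨i, hik, hbi⟩
    by_contra hnb
    have hlt : b - t < beta Y i := by omega
    obtain ⟨j, hjr, hjx⟩ := exists_xval hik hlt hnb
    have hmem : (i, j) ∈ Y := YoungDiagram.mem_iff_lt_rowLen.mpr hjr
    have heq := beta_eq_hook_add_xval hmem
    have : hook Y i j = t := by omega
    exact hcore (i, j) ((YoungDiagram.mem_cells _).mpr hmem) (by rw [this])
  · intro hcl c hc ⟨m, hm⟩
    have hmem : (c.1, c.2) ∈ Y := (YoungDiagram.mem_cells _).mp hc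
    have hpos := hook_pos hmem
    have heq := beta_eq_hook_add_xval hmem
    have hik : c.1 < Y.colLen 0 := by
      have h2 : c.1 < Y.colLen c.2 := YoungDiagram.mem_iff_lt_colLen.mp hmem
      have := colLen_le Y c.2
      omega
    have hchain : ∀ l : ℕ, l ≤ m → beta Y c.1 - l * t ∈ betaSet Y := by
      intro l
      induction l with
      | zero => intro _; simpa using mem_betaSet.mpr ⟨c.1, hik, rfl⟩
      | succ l ih =>
        intro hl
        have h1 := ih (by omega)
        have h2 : t ≤ beta Y c.1 - l * t := by
          have hmul : (l + 1) * t ≤ hook Y c.1 c.2 := by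
            rw [hm, mul_comm t m]; exact Nat.mul_le_mul_right t hl
          have hsplit : (l + 1) * t = l * t + t := by ring
          omega
        have := hcl _ h1 h2
        have heq2 : beta Y c.1 - l * t - t = beta Y c.1 - (l+1) * t := by ring_nf; omega
        rwa [heq2] at this
    have hm1 : 1 ≤ m := by
      rcases Nat.eq_zero_or_pos m with h | h
      · subst h; simp at hm; omega
      · exact h
    have := hchain m le_rfl
    have hxx : beta Y c.1 - m * t = xval Y c.2 := by
      have hcm : t * m = m * t := mul_comm t m
      omega
    rw [hxx] at this
    exact xval_not_mem Y c.2 this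

lemma distinctParts_iff_noTwoConsec {Y : YoungDiagram} :
    DistinctParts Y ↔ NoTwoConsec (betaSet Y) := by
  constructor
  · intro hd x hx hx1
    rcases mem_betaSet.mp hx with ⟨i', hik', hb'⟩
    rcases mem_betaSet.mp hx1 with ⟨i'', hik'', hb''⟩
    -- beta i'' = beta i' + 1, so i'' < i'
    have hlt : i'' < i' := by
      by_contra hc
      push_neg at hc
      rcases eq_or_lt_of_le hc with h | h
      · subst h; omega
      · have := beta_lt h hik''; omega
    have hstep : i' = i'' + 1 := by
      by_contra hc
      have h1 : i'' + 1 < i' := by omega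
      have h2 := beta_lt h1 hik'
      have h3 := beta_lt (by omega : i'' < i'' + 1) (by omega : i'' + 1 < Y.colLen 0)
      omega
    subst hstep
    have hrpos : 0 < Y.rowLen (i'' + 1) := (rowLen_pos_iff Y _).mpr hik'
    have := hd i'' hrpos
    unfold beta at hb' hb''
    omega
  · intro hn i hpos
    have hik : i + 1 < Y.colLen 0 := (rowLen_pos_iff Y _).mp hpos
    by_contra hc
    push_neg at hc
    have hanti := Y.rowLen_anti i (i+1) (Nat.le_succ i)
    have heq : Y.rowLen i = Y.rowLen (i+1) := le_antisymm hc hanti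
    have h1 : beta Y i = beta Y (i+1) + 1 := by unfold beta; omega
    exact hn (beta Y (i+1)) (mem_betaSet.mpr ⟨i+1, hik, rfl⟩)
      (by rw [← h1]; exact mem_betaSet.mpr ⟨i, by omega, rfl⟩)

end NS
namespace NS

def benum (B : Finset ℕ) (i : ℕ) : ℕ :=
  if h : i < B.card then B.orderEmbOfFin rfl ⟨B.card - 1 - i, by omega⟩ else 0

lemma benum_mem {B : Finset ℕ} {i : ℕ} (h : i < B.card) : benum B i ∈ B := by
  rw [benum, dif_pos h]; exact Finset.orderEmbOfFin_mem B rfl _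

lemma benum_lt {B : Finset ℕ} {i1 i2 : ℕ} (h : i1 < i2) (h2 : i2 < B.card) :
    benum B i2 < benum B i1 := by
  rw [benum, benum, dif_pos h2, dif_pos (h.trans h2)]
  exact (B.orderEmbOfFin rfl).strictMono (by simp [Fin.lt_def]; omega)

lemma benum_gap {B : Finset ℕ} {i j : ℕ} (hij : i ≤ j) (hj : j < B.card) :
    benum B j + (j - i) ≤ benum B i := by
  induction j with
  | zero => simp_all
  | succ j ih =>
    rcases Nat.eq_or_lt_of_le hij with h | h
    · subst h; simp
    · have h1 : benum B (j+1) < benum B j := benum_lt (by omega) hj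
      have h2 := ih (by omega) (by omega)
      omega

lemma benum_ge {B : Finset ℕ} (h0 : 0 ∉ B) {i : ℕ} (hi : i < B.card) :
    B.card - 1 - i + 1 ≤ benum B i := by
  have h1 := benum_gap (by omega : i ≤ B.card - 1) (by omega : B.card - 1 < B.card)
  have h2 : benum B (B.card - 1) ∈ B := benum_mem (by omega)
  have h3 : benum B (B.card - 1) ≠ 0 := fun hc => h0 (hc ▸ h2)
  omega

lemma benum_image (B : Finset ℕ) :
    (Finset.range B.card).image (benum B) = B := by
  apply Finset.Subset.antisymm
  · intro x hx
    rcases Finset.mem_image.mp hx with ⟨i, hi, hbi⟩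
    exact hbi ▸ benum_mem (Finset.mem_range.mp hi)
  · intro x hx
    have : x ∈ Set.range (B.orderEmbOfFin rfl) := by
      rw [Finset.range_orderEmbOfFin]; exact hx
    rcases this with ⟨t, ht⟩
    refine Finset.mem_image.mpr ⟨B.card - 1 - t.1, Finset.mem_range.mpr (by omega), ?_⟩
    rw [benum, dif_pos (by omega : B.card - 1 - t.1 < B.card)]
    have : (⟨B.card - 1 - (B.card - 1 - t.1), by omega⟩ : Fin B.card) = t := by
      ext; simp; omega
    rw [this, ht]

def lam (B : Finset ℕ) (i : ℕ) : ℕ := benum B i - (B.card - 1 - i)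

def fromBeta (B : Finset ℕ) : YoungDiagram where
  cells := (Finset.range B.card).biUnion (fun i => {i} ×ˢ Finset.range (lam B i))
  isLowerSet := by
    rintro ⟨i2, j2⟩ ⟨i1, j1⟩ ⟨(hi : i1 ≤ i2), (hj : j1 ≤ j2)⟩ hmem
    simp only [Finset.coe_biUnion, Finset.coe_range, Set.mem_iUnion, Finset.coe_product,
      Set.mem_prod, Finset.coe_singleton, Set.mem_singleton_iff, Set.mem_Iio,
      Set.mem_range, Finset.mem_coe, Finset.mem_range] at hmem ⊢
    rcases hmem with ⟨i, hik, hii, hjj⟩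
    subst hii
    refine ⟨i1, by omega, rfl, ?_⟩
    have hgap := benum_gap hi hik
    have : lam B i2 ≤ lam B i1 := by unfold lam; omega
    omega

lemma mem_fromBeta {B : Finset ℕ} {i j : ℕ} :
    (i, j) ∈ fromBeta B ↔ i < B.card ∧ j < lam B i := by
  show (i, j) ∈ (fromBeta B).cells ↔ _
  simp only [fromBeta, Finset.mem_biUnion, Finset.mem_range, Finset.mem_product,
    Finset.mem_singleton]
  constructor
  · rintro ⟨i', hi', rfl, hj⟩
    exact ⟨hi', hj⟩
  · rintro ⟨h1, h2⟩
    exact ⟨i, h1, rfl, h2⟩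

lemma nat_eq_of_lt_iff {a b : ℕ} (h : ∀ j, j < a ↔ j < b) : a = b := by
  have h1 := h a
  have h2 := h b
  omega

lemma rowLen_fromBeta (B : Finset ℕ) (i : ℕ) :
    (fromBeta B).rowLen i = if i < B.card then lam B i else 0 := by
  apply nat_eq_of_lt_iff
  intro j
  rw [← YoungDiagram.mem_iff_lt_rowLen, mem_fromBeta]
  by_cases h : i < B.card
  · rw [if_pos h]; simp [h]
  · rw [if_neg h]
    constructor
    · rintro ⟨h1, _⟩; exact absurd h1 h
    · omega

lemma colLen_fromBeta (B : Finset ℕ) (h0 : 0 ∉ B) :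
    (fromBeta B).colLen 0 = B.card := by
  apply nat_eq_of_lt_iff
  intro i
  rw [← YoungDiagram.mem_iff_lt_colLen, mem_fromBeta]
  constructor
  · rintro ⟨h, _⟩; exact h
  · intro h
    refine ⟨h, ?_⟩
    have := benum_ge h0 h
    unfold lam; omega

lemma betaSet_fromBeta (B : Finset ℕ) (h0 : 0 ∉ B) :
    betaSet (fromBeta B) = B := by
  rw [betaSet_eq]
  rw [colLen_fromBeta B h0]
  have himg : Finset.image (beta (fromBeta B)) (Finset.range B.card)
      = Finset.image (benum B) (Finset.range B.card) := by
    apply Finset.image_congr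
    intro i hi
    have hik : i < B.card := Finset.mem_range.mp (by simpa using hi)
    rw [beta, rowLen_fromBeta, if_pos hik, colLen_fromBeta B h0]
    have := benum_ge h0 hik
    unfold lam; omega
  rw [himg, benum_image]

lemma card_betaSet (Y : YoungDiagram) : (betaSet Y).card = Y.colLen 0 := by
  rw [betaSet_eq]
  rw [Finset.card_image_of_injOn, Finset.card_range]
  intro i1 h1 i2 h2 he
  by_contra hne
  rcases Nat.lt_or_ge i1 i2 with h | h
  · have := beta_lt h (Finset.mem_range.mp h2); omega
  · have := beta_lt (by omega : i2 < i1) (Finset.mem_range.mp h1); omega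

lemma benum_betaSet (Y : YoungDiagram) {i : ℕ} (hi : i < Y.colLen 0) :
    benum (betaSet Y) i = beta Y i := by
  set k := Y.colLen 0 with hk
  have hcard : (betaSet Y).card = k := card_betaSet Y
  set f : Fin k → ℕ := fun t => beta Y (k - 1 - t.1) with hf
  have hfs : ∀ t, f t ∈ betaSet Y := fun t =>
    mem_betaSet.mpr ⟨k - 1 - t.1, by omega, rfl⟩
  have hmono : StrictMono f := by
    intro t1 t2 ht
    have ht1 := t1.2
    have ht2 := t2.2
    have hlt : t1.1 < t2.1 := ht
    exact beta_lt (by omega) (by omega)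
  have huniq := Finset.orderEmbOfFin_unique hcard hfs hmono
  rw [benum, dif_pos (by omega : i < (betaSet Y).card)]
  have : (betaSet Y).orderEmbOfFin rfl ⟨(betaSet Y).card - 1 - i, by omega⟩
      = (betaSet Y).orderEmbOfFin hcard ⟨k - 1 - i, by omega⟩ := by
    apply Finset.orderEmbOfFin_eq_orderEmbOfFin_iff.mpr
    simp; omega
  rw [this, ← huniq]
  simp only [hf]
  congr 1
  omega

lemma fromBeta_betaSet (Y : YoungDiagram) : fromBeta (betaSet Y) = Y := by
  have hcard : (betaSet Y).card = Y.colLen 0 := card_betaSet Y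
  ext ⟨i, j⟩
  simp only [YoungDiagram.mem_cells]
  rw [mem_fromBeta, YoungDiagram.mem_iff_lt_rowLen]
  constructor
  · rintro ⟨h1, h2⟩
    have hik : i < Y.colLen 0 := by omega
    have := benum_betaSet Y hik
    unfold lam at h2
    rw [this, hcard] at h2
    unfold beta at h2
    omega
  · intro h
    have hpos : 0 < Y.rowLen i := by omega
    have hik : i < Y.colLen 0 := (rowLen_pos_iff Y i).mp hpos
    refine ⟨by omega, ?_⟩
    unfold lam
    rw [benum_betaSet Y hik, hcard]
    unfold beta
    omega

lemma betaSet_injective : Function.Injective betaSet := by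
  intro Y1 Y2 h
  rw [← fromBeta_betaSet Y1, ← fromBeta_betaSet Y2, h]

end NS
namespace NS

def gfib (d : ℕ) : ℕ → ℕ
  | 0 => 0
  | 1 => 1
  | (m+2) => gfib d (m+1) + d * gfib d m

lemma gfib_zero (d : ℕ) : gfib d 0 = 0 := rfl
lemma gfib_one (d : ℕ) : gfib d 1 = 1 := rfl
lemma gfib_add_two (d m : ℕ) : gfib d (m+2) = gfib d (m+1) + d * gfib d m := rfl

def G (d : ℕ) : ℕ → Finset (List ℕ)
  | 0 => {[]}
  | 1 => (Finset.range (d+1)).image (fun a => [a])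
  | (m+2) => ((G d (m+1)).image (fun l => 0 :: l)) ∪
      ((Finset.range d ×ˢ G d m).image (fun p => (p.1+1) :: 0 :: p.2))

lemma mem_G {d : ℕ} : ∀ {m : ℕ} {l : List ℕ}, l ∈ G d m ↔
    l.length = m ∧ (∀ a ∈ l, a ≤ d) ∧ l.Chain' (fun a b => a = 0 ∨ b = 0) := by
  intro m
  induction m using Nat.strong_induction_on with
  | _ m ih =>
    intro l
    match m with
    | 0 =>
      simp only [G, Finset.mem_singleton]
      constructor
      · rintro rfl; simp [List.Chain']
      · rintro ⟨h, _, _⟩; exact List.eq_nil_of_length_eq_zero h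
    | 1 =>
      simp only [G, Finset.mem_image, Finset.mem_range]
      constructor
      · rintro ⟨a, ha, rfl⟩
        refine ⟨rfl, ?_, by simp [List.Chain']⟩
        intro b hb
        simp at hb
        omega
      · rintro ⟨hlen, hle, _⟩
        match l, hlen with
        | [a], _ => exact ⟨a, by have := hle a (by simp); omega, rfl⟩
    | (m+2) =>
      simp only [G, Finset.mem_union, Finset.mem_image, Finset.mem_product, Finset.mem_range]
      constructor
      · rintro (⟨l', hl', rfl⟩ | ⟨⟨a, t⟩, hp, rfl⟩)
        · obtain ⟨h1, h2, h3⟩ := (ih (m+1) (by omega)).mp hl'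
          refine ⟨by simp [h1], ?_, ?_⟩
          · intro b hb
            rcases List.mem_cons.mp hb with h | h
            · omega
            · exact h2 b h
          · rw [List.Chain', List.isChain_cons]
            exact ⟨fun y _ => Or.inl rfl, h3⟩
        · simp only at hp
          obtain ⟨ha, ht⟩ := hp
          obtain ⟨h1, h2, h3⟩ := (ih m (by omega)).mp ht
          refine ⟨by simp [h1], ?_, ?_⟩
          · intro b hb
            rcases List.mem_cons.mp hb with h | h
            · omega
            · rcases List.mem_cons.mp h with h' | h'
              · omega
              · exact h2 b h'
          · rw [List.Chain', List.isChain_cons_cons, List.isChain_cons]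
            exact ⟨Or.inr rfl, fun y _ => Or.inl rfl, h3⟩
      · rintro ⟨hlen, hle, hch⟩
        match l, hlen with
        | (a :: b :: t), hlen =>
          rw [List.Chain', List.isChain_cons_cons] at hch
          rcases Nat.eq_zero_or_pos a with ha | ha
          · subst ha
            refine Or.inl ⟨b :: t, (ih (m+1) (by omega)).mpr ⟨by simpa using hlen, ?_, hch.2⟩, rfl⟩
            intro x hx
            exact hle x (List.mem_cons_of_mem _ hx)
          · have hb : b = 0 := by rcases hch.1 with h | h <;> omega
            subst hb
            refine Or.inr ⟨⟨a - 1, t⟩, ⟨?_, ?_⟩, ?_⟩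
            · have := hle a (by simp)
              simp only []
              omega
            · refine (ih m (by omega)).mpr ⟨by simpa using hlen, ?_, ?_⟩
              · intro x hx
                exact hle x (by simp [hx])
              · exact (List.isChain_cons.mp hch.2).2
            · simp only []
              have : a - 1 + 1 = a := by omega
              rw [this]

lemma card_G (d : ℕ) : ∀ m : ℕ, (G d m).card = gfib d (m+2) := by
  intro m
  induction m using Nat.strong_induction_on with
  | _ m ih =>
    match m with
    | 0 => simp [G, gfib]
    | 1 =>
      show ((Finset.range (d+1)).image (fun a => [a])).card = gfib d 3
      rw [Finset.card_image_of_injective _ (fun a b h => by simpa using h), Finset.card_range]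
      rw [show (3:ℕ) = 1 + 2 from rfl, gfib_add_two, show (1+1 : ℕ) = 0 + 2 from rfl,
        gfib_add_two, gfib_one, gfib_zero]
      omega
    | (m+2) =>
      show (((G d (m+1)).image (fun l => 0 :: l)) ∪
        ((Finset.range d ×ˢ G d m).image (fun p => (p.1+1) :: 0 :: p.2))).card = _
      rw [Finset.card_union_of_disjoint]
      · rw [Finset.card_image_of_injective _ (fun a b h => by simpa using h),
          Finset.card_image_of_injective _ ?hinj]
        case hinj =>
          rintro ⟨a1, t1⟩ ⟨a2, t2⟩ h
          simp only [List.cons.injEq] at h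
          obtain ⟨h1, -, h2⟩ := h
          have : a1 = a2 := by omega
          subst this; subst h2; rfl
        rw [Finset.card_product, Finset.card_range]
        rw [ih (m+1) (by omega), ih m (by omega)]
        rw [gfib_add_two d (m+2)]
      · rw [Finset.disjoint_left]
        rintro l hl1 hl2
        rcases Finset.mem_image.mp hl1 with ⟨l', _, rfl⟩
        rcases Finset.mem_image.mp hl2 with ⟨p, _, hp⟩
        simp only [List.cons.injEq] at hp
        omega

def ValidB (d n : ℕ) : Set (Finset ℕ) :=
  {B | 0 ∉ B ∧ NoTwoConsec B ∧ Closed B n ∧ Closed B (d*n+1)}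

lemma valid_not_dvd {d n : ℕ} (hn : 1 ≤ n) {B : Finset ℕ} (hB : B ∈ ValidB d n) :
    ∀ x ∈ B, ¬ n ∣ x := by
  obtain ⟨h0, hc, hcn, _⟩ := hB
  intro x
  induction x using Nat.strong_induction_on with
  | _ x ih =>
    intro hx hdvd
    have hx0 : x ≠ 0 := fun h => h0 (h ▸ hx)
    have hxn : n ≤ x := Nat.le_of_dvd (by omega) hdvd
    have h2 : x - n ∈ B := hcn x hx hxn
    have hne : x - n ≠ 0 := fun h => h0 (h ▸ h2)
    exact ih (x - n) (by omega) h2 (Nat.dvd_sub hdvd dvd_rfl)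

lemma closed_chain {n : ℕ} {B : Finset ℕ} (hcn : Closed B n) :
    ∀ (j : ℕ) (x : ℕ), x ∈ B → j * n ≤ x → x - j * n ∈ B := by
  intro j
  induction j with
  | zero => intro x hx _; simpa using hx
  | succ j ih =>
    intro x hx hle
    have hexp : (j + 1) * n = j * n + n := by ring
    have h1 : x - j * n ∈ B := ih x hx (by omega)
    have h2 := hcn _ h1 (by omega)
    have : x - j * n - n = x - (j+1) * n := by omega
    rwa [this] at h2

lemma valid_lt {d n : ℕ} (hn : 1 ≤ n) {B : Finset ℕ} (hB : B ∈ ValidB d n) :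
    ∀ x ∈ B, x < d * n := by
  intro x hx
  by_contra hc
  push_neg at hc
  have hndvd := valid_not_dvd hn hB x hx
  have hne : x ≠ d * n := fun h => hndvd (h ▸ dvd_mul_left n d)
  have hge : d * n + 1 ≤ x := by omega
  have h1 : x - (d * n + 1) ∈ B := hB.2.2.2 x hx hge
  have h2 : x - d * n ∈ B := closed_chain hB.2.2.1 d x hx (by omega)
  exact hB.2.1 _ h1 (by rwa [show x - (d*n+1) + 1 = x - d*n by omega])

lemma downclosed_card {S : Finset ℕ} (hdc : ∀ j, j + 1 ∈ S → j ∈ S) :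
    ∀ j, j ∈ S ↔ j < S.card := by
  have hsub : ∀ (k : ℕ) (j : ℕ), j ∈ S → j - k ∈ S := by
    intro k
    induction k with
    | zero => intro j hj; simpa using hj
    | succ k ih =>
      intro j hj
      have h1 := ih j hj
      rcases Nat.eq_zero_or_pos (j - k) with h | h
      · have h2 : j - (k+1) = j - k := by omega
        rw [h2]; exact h1
      · have : j - k = (j - (k+1)) + 1 := by omega
        rw [this] at h1
        exact hdc _ h1
  intro j
  constructor
  · intro hj
    have hss : Finset.range (j+1) ⊆ S := by
      intro i hi
      have hij : i ≤ j := by simpa [Nat.lt_succ_iff] using hi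
      have := hsub (j - i) j hj
      rwa [show j - (j - i) = i by omega] at this
    have := Finset.card_le_card hss
    rw [Finset.card_range] at this
    omega
  · intro hj
    by_contra hns
    have hss : S ⊆ Finset.range j := by
      intro x hx
      rcases Nat.lt_or_ge x j with h | h
      · simpa using h
      · exfalso
        have := hsub (x - j) x hx
        rw [show x - (x - j) = j by omega] at this
        exact hns this
    have := Finset.card_le_card hss
    rw [Finset.card_range] at this
    omega

def cnt (d n : ℕ) (B : Finset ℕ) (a : ℕ) : ℕ :=
  ((Finset.range d).filter (fun j => a + j * n ∈ B)).card

lemma cnt_spec {d n : ℕ} {B : Finset ℕ} (hB : B ∈ ValidB d n) (a : ℕ) :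
    ∀ j, (j < d ∧ a + j * n ∈ B) ↔ j < cnt d n B a := by
  intro j
  have hiff : ∀ j', j' ∈ (Finset.range d).filter (fun j => a + j * n ∈ B) ↔
      (j' < d ∧ a + j' * n ∈ B) := by
    intro j'; simp [Finset.mem_filter]
  rw [← hiff j]
  apply downclosed_card
  intro j' hj'
  rw [hiff] at hj' ⊢
  refine ⟨by omega, ?_⟩
  have hexp : (j' + 1) * n = j' * n + n := by ring
  have := hB.2.2.1 _ hj'.2 (by omega)
  rwa [show a + (j'+1) * n - n = a + j' * n by omega] at this

lemma cnt_le {d n : ℕ} (B : Finset ℕ) (a : ℕ) : cnt d n B a ≤ d := by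
  calc cnt d n B a ≤ (Finset.range d).card := Finset.card_filter_le _ _
  _ = d := Finset.card_range d

lemma mem_valid {d n : ℕ} (hn : 1 ≤ n) {B : Finset ℕ} (hB : B ∈ ValidB d n) (x : ℕ) :
    x ∈ B ↔ 1 ≤ x % n ∧ x / n < cnt d n B (x % n) := by
  constructor
  · intro hx
    have h1 : ¬ n ∣ x := valid_not_dvd hn hB x hx
    have h2 : x % n ≠ 0 := fun h => h1 (Nat.dvd_of_mod_eq_zero h)
    have h3 : x < d * n := valid_lt hn hB x hx
    have h4 : x / n < d := (Nat.div_lt_iff_lt_mul (by omega)).mpr (by omega)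
    have h5 : x % n + (x / n) * n = x := by
      have := Nat.mod_add_div x n
      have hcomm : n * (x / n) = (x / n) * n := Nat.mul_comm _ _
      omega
    refine ⟨by omega, ((cnt_spec hB (x % n) (x / n)).mp ⟨h4, by rwa [h5]⟩)⟩
  · rintro ⟨h1, h2⟩
    have := ((cnt_spec hB (x % n) (x / n)).mpr h2).2
    have h5 : x % n + (x / n) * n = x := by
      have := Nat.mod_add_div x n
      have hcomm : n * (x / n) = (x / n) * n := Nat.mul_comm _ _
      omega
    rwa [h5] at this

end NS
namespace NS

lemma getD_map_range {f : ℕ → ℕ} {m p : ℕ} (hp : p < m) :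
    (((List.range m).map f).getD p 0) = f p := by
  have hlen : ((List.range m).map f).length = m := by simp
  rw [List.getD_eq_getElem _ _ (by omega)]
  simp [hp]

lemma getD_le_of_forall {l : List ℕ} {d : ℕ} (hle : ∀ a ∈ l, a ≤ d) (p : ℕ) :
    l.getD p 0 ≤ d := by
  rcases Nat.lt_or_ge p l.length with h | h
  · rw [List.getD_eq_getElem _ _ h]
    exact hle _ (List.getElem_mem h)
  · rw [List.getD_eq_default _ _ h]
    omega

lemma chain'_getD {l : List ℕ} {P : ℕ → ℕ → Prop} (hch : l.Chain' P) {i : ℕ}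
    (hi : i + 1 < l.length) : P (l.getD i 0) (l.getD (i+1) 0) := by
  rw [List.getD_eq_getElem _ _ (by omega), List.getD_eq_getElem _ _ (by omega)]
  exact List.isChain_iff_getElem.mp hch i (by omega)

lemma chain'_map_range {P : ℕ → ℕ → Prop} {f : ℕ → ℕ} {m : ℕ}
    (h : ∀ i, i + 1 < m → P (f i) (f (i+1))) :
    List.Chain' P ((List.range m).map f) := by
  rw [List.Chain', List.isChain_iff_getElem]
  intro i hi
  simp only [List.length_map, List.length_range] at hi
  simp only [List.getElem_map, List.getElem_range]
  exact h i (by omega)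

def psi (d n : ℕ) (B : Finset ℕ) : List ℕ :=
  (List.range (n-1)).map (fun a => cnt d n B (a+1))

lemma psi_mem_G {d n : ℕ} (hd : 1 ≤ d) (hn : 1 ≤ n) {B : Finset ℕ}
    (hB : B ∈ ValidB d n) : psi d n B ∈ G d (n-1) := by
  rw [mem_G]
  refine ⟨by simp [psi], ?_, ?_⟩
  · intro a ha
    rcases List.mem_map.mp ha with ⟨i, _, rfl⟩
    exact cnt_le B (i+1)
  · apply chain'_map_range
    intro i hi
    by_contra hc
    push_neg at hc
    obtain ⟨h1, h2⟩ := hc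
    have hm1 : i + 1 ∈ B := by
      have := (cnt_spec hB (i+1) 0).mpr (by omega)
      simpa using this.2
    have hm2 : i + 2 ∈ B := by
      have := (cnt_spec hB (i+1+1) 0).mpr (by omega)
      simpa using this.2
    exact hB.2.1 (i+1) hm1 (by rwa [show i+1+1 = i+2 from rfl])

lemma psi_injOn {d n : ℕ} (hn : 1 ≤ n) {B1 B2 : Finset ℕ}
    (h1 : B1 ∈ ValidB d n) (h2 : B2 ∈ ValidB d n) (heq : psi d n B1 = psi d n B2) :
    B1 = B2 := by
  ext x
  rw [mem_valid hn h1 x, mem_valid hn h2 x]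
  rcases Nat.eq_zero_or_pos (x % n) with h | h
  · omega
  · have hlt : x % n < n := Nat.mod_lt x (by omega)
    have hp : x % n - 1 < n - 1 := by omega
    have := congrArg (fun l => l.getD (x % n - 1) 0) heq
    simp only [psi] at this
    rw [getD_map_range hp, getD_map_range hp] at this
    rw [show x % n - 1 + 1 = x % n by omega] at this
    rw [this]

def Bof (d n : ℕ) (l : List ℕ) : Finset ℕ :=
  ((Finset.range n ×ˢ Finset.range d).filter
    (fun p => 1 ≤ p.1 ∧ p.2 < l.getD (p.1 - 1) 0)).image (fun p => p.1 + p.2 * n)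

lemma mem_Bof {d n : ℕ} (hn : 1 ≤ n) {l : List ℕ} (hle : ∀ a ∈ l, a ≤ d) {x : ℕ} :
    x ∈ Bof d n l ↔ 1 ≤ x % n ∧ x / n < l.getD (x % n - 1) 0 := by
  constructor
  · intro hx
    rcases Finset.mem_image.mp hx with ⟨⟨a, j⟩, hp, rfl⟩
    rcases Finset.mem_filter.mp hp with ⟨hr, ha1, hj⟩
    rcases Finset.mem_product.mp hr with ⟨han, hjd⟩
    have han' : a < n := Finset.mem_range.mp han
    have hmod : (a + j * n) % n = a := by
      rw [Nat.add_mul_mod_self_right, Nat.mod_eq_of_lt han']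
    have hdiv : (a + j * n) / n = j := by
      rw [Nat.add_mul_div_right _ _ (by omega : 0 < n), Nat.div_eq_of_lt han']
      omega
    rw [hmod, hdiv]
    exact ⟨ha1, hj⟩
  · rintro ⟨h1, h2⟩
    have hlt : x % n < n := Nat.mod_lt x (by omega)
    have hjd : x / n < d := by
      have := getD_le_of_forall hle (x % n - 1)
      omega
    refine Finset.mem_image.mpr ⟨⟨x % n, x / n⟩, Finset.mem_filter.mpr
      ⟨Finset.mem_product.mpr ⟨Finset.mem_range.mpr hlt, Finset.mem_range.mpr hjd⟩, h1, h2⟩, ?_⟩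
    have := Nat.mod_add_div x n
    have hcomm : n * (x / n) = (x / n) * n := Nat.mul_comm _ _
    simp only []
    omega

lemma Bof_valid {d n : ℕ} (hd : 1 ≤ d) (hn : 1 ≤ n) {l : List ℕ}
    (hl : l ∈ G d (n-1)) : Bof d n l ∈ ValidB d n := by
  obtain ⟨hlen, hle, hch⟩ := mem_G.mp hl
  have hmem := fun x => mem_Bof hn hle (x := x)
  refine ⟨?_, ?_, ?_, ?_⟩
  · intro hc
    have := (hmem 0).mp hc
    simp [Nat.zero_mod] at this
  · intro x hx hx1
    obtain ⟨ha1, ha2⟩ := (hmem x).mp hx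
    obtain ⟨hb1, hb2⟩ := (hmem (x+1)).mp hx1
    set a := x % n with hadef
    have hlt : a < n := Nat.mod_lt x (by omega)
    have hn2 : 2 ≤ n := by
      rcases Nat.eq_or_lt_of_le hn with h | h
      · exfalso; rw [← h] at hlt; omega
      · omega
    have hsucc : (x + 1) % n = (a + 1) % n := by
      rw [Nat.add_mod, Nat.mod_eq_of_lt (show 1 < n by omega)]
    have han : a + 1 < n := by
      by_contra hc
      have : a + 1 = n := by omega
      rw [hsucc, this, Nat.mod_self] at hb1
      omega
    have hb1' : (x + 1) % n = a + 1 := by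
      rw [hsucc, Nat.mod_eq_of_lt han]
    have hdiv : (x + 1) / n = x / n := by
      have h5 := Nat.mod_add_div x n
      have : x + 1 = (a + 1) + (x / n) * n := by
        have hcomm : n * (x / n) = (x / n) * n := Nat.mul_comm _ _
        omega
      rw [this, Nat.add_mul_div_right _ _ (by omega : 0 < n), Nat.div_eq_of_lt han]
      omega
    rw [hb1'] at hb2
    rw [show a + 1 - 1 = a by omega] at hb2
    have hpos : a - 1 + 1 < l.length := by rw [hlen]; omega
    have hgd := chain'_getD hch hpos
    rw [show a - 1 + 1 = a by omega] at hgd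
    rcases hgd with h | h
    · exact absurd (h ▸ ha2) (Nat.not_lt_zero _)
    · exact absurd (h ▸ hb2) (Nat.not_lt_zero _)
  · intro x hx hnx
    obtain ⟨h1, h2⟩ := (hmem x).mp hx
    rw [hmem (x - n)]
    have hmod : (x - n) % n = x % n := by
      conv_rhs => rw [show x = (x - n) + n by omega]
      rw [Nat.add_mod_right]
    have hdiv : (x - n) / n = x / n - 1 := by
      conv_rhs => rw [show x = (x - n) + n by omega]
      rw [Nat.add_div_right _ (by omega : 0 < n), Nat.add_sub_cancel]
    rw [hmod, hdiv]
    refine ⟨h1, ?_⟩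
    generalize x / n = q at h2 ⊢
    omega
  · intro x hx hge
    exfalso
    obtain ⟨h1, h2⟩ := (hmem x).mp hx
    have hgd := getD_le_of_forall hle (x % n - 1)
    have hlt : x % n < n := Nat.mod_lt x (by omega)
    have h5 := Nat.mod_add_div x n
    have hmul : n * (x / n) ≤ n * (d - 1) := Nat.mul_le_mul_left n (by omega)
    have hdn : n * d = d * n := Nat.mul_comm _ _
    have hnd : n ≤ n * d := Nat.le_mul_of_pos_right n (by omega)
    have hexp : n * (d - 1) = n * d - n := by
      rcases Nat.eq_or_lt_of_le hd with h | h
      · rw [← h]; simp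
      · have : d - 1 + 1 = d := by omega
        calc n * (d-1) = n * (d - 1 + 1) - n := by rw [Nat.mul_add]; omega
        _ = n * d - n := by rw [this]
    omega

lemma psi_Bof {d n : ℕ} (hd : 1 ≤ d) (hn : 1 ≤ n) {l : List ℕ}
    (hl : l ∈ G d (n-1)) : psi d n (Bof d n l) = l := by
  obtain ⟨hlen, hle, hch⟩ := mem_G.mp hl
  apply List.ext_get
  · simp [psi, hlen]
  intro p h1 h2
  have hp : p < n - 1 := by simpa [psi] using h1
  simp only [psi] at h1 ⊢
  rw [List.get_eq_getElem, List.get_eq_getElem, List.getElem_map, List.getElem_range]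
  -- goal : cnt d n (Bof d n l) (p+1) = l.get ⟨p, h2⟩
  have hval : ∀ j < d, ((p+1) + j * n ∈ Bof d n l ↔ j < l.getD p 0) := by
    intro j hj
    rw [mem_Bof hn hle]
    have hlt : p + 1 < n := by omega
    have hmod : ((p+1) + j * n) % n = p + 1 := by
      rw [Nat.add_mul_mod_self_right, Nat.mod_eq_of_lt hlt]
    have hdiv : ((p+1) + j * n) / n = j := by
      rw [Nat.add_mul_div_right _ _ (by omega : 0 < n), Nat.div_eq_of_lt hlt]
      omega
    rw [hmod, hdiv]
    simp
  have hfilter : (Finset.range d).filter (fun j => (p+1) + j * n ∈ Bof d n l)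
      = Finset.range (l.getD p 0) := by
    ext j
    simp only [Finset.mem_filter, Finset.mem_range]
    constructor
    · rintro ⟨hjd, hjm⟩
      exact (hval j hjd).mp hjm
    · intro hj
      have hjd : j < d := by
        have := getD_le_of_forall hle p
        omega
      exact ⟨hjd, (hval j hjd).mpr hj⟩
  show cnt d n (Bof d n l) (p+1) = _
  rw [cnt, hfilter, Finset.card_range]
  rw [List.getD_eq_getElem _ _ (by omega)]

lemma ncard_ValidB {d n : ℕ} (hd : 1 ≤ d) (hn : 1 ≤ n) :
    (ValidB d n).ncard = gfib d (n+1) := by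
  have himg : psi d n '' (ValidB d n) = ↑(G d (n-1)) := by
    apply Set.Subset.antisymm
    · rintro _ ⟨B, hB, rfl⟩
      exact psi_mem_G hd hn hB
    · intro l hl
      have hl' : l ∈ G d (n-1) := hl
      exact ⟨Bof d n l, Bof_valid hd hn hl', psi_Bof hd hn hl'⟩
  have hinj : Set.InjOn (psi d n) (ValidB d n) :=
    fun B1 h1 B2 h2 heq => psi_injOn hn h1 h2 heq
  rw [← Set.ncard_image_of_injOn hinj, himg, Set.ncard_coe_finset, card_G]
  congr 1
  omega

end NS
namespace NS

lemma Mcount_eq (d n : ℕ) (hd : 1 ≤ d) (hn : 1 ≤ n) :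
    Mcount d n = gfib d (n + 1) := by
  have himg : betaSet '' {Y : YoungDiagram | DistinctParts Y ∧ IsCore Y n ∧ IsCore Y (d * n + 1)}
      = ValidB d n := by
    apply Set.Subset.antisymm
    · rintro _ ⟨Y, ⟨h1, h2, h3⟩, rfl⟩
      exact ⟨zero_not_mem_betaSet Y, distinctParts_iff_noTwoConsec.mp h1,
        (isCore_iff_closed hn).mp h2, (isCore_iff_closed (by omega)).mp h3⟩
    · intro B hB
      refine ⟨fromBeta B, ?_, betaSet_fromBeta B hB.1⟩
      have hbs : betaSet (fromBeta B) = B := betaSet_fromBeta B hB.1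
      refine ⟨distinctParts_iff_noTwoConsec.mpr (by rw [hbs]; exact hB.2.1),
        (isCore_iff_closed hn).mpr (by rw [hbs]; exact hB.2.2.1),
        (isCore_iff_closed (by omega)).mpr (by rw [hbs]; exact hB.2.2.2)⟩
  unfold Mcount
  rw [← Set.ncard_image_of_injOn (betaSet_injective.injOn), himg, ncard_ValidB hd hn]

end NS

theorem nath_sellers (d : ℕ) (hd : 1 ≤ d) :
    ∃ M : ℤ → ℕ, M (-1) = 0 ∧ M 0 = 1 ∧
      (∀ n : ℤ, 1 ≤ n → M n = M (n - 1) + d * M (n - 2)) ∧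
      (∀ n : ℤ, 1 ≤ n → M n = Mcount d n.toNat) := by
  refine ⟨fun z => NS.gfib d (z + 1).toNat, ?_, ?_, ?_, ?_⟩
  · have h : ((-1 : ℤ) + 1).toNat = 0 := by norm_num
    simp only [h, NS.gfib_zero]
  · have h : ((0 : ℤ) + 1).toNat = 1 := by norm_num
    simp only [h, NS.gfib_one]
  · intro n hn
    obtain ⟨m, rfl⟩ : ∃ m : ℕ, n = (m : ℤ) + 1 := ⟨(n - 1).toNat, by omega⟩
    have h1 : ((m : ℤ) + 1 + 1).toNat = m + 2 := by omega
    have h2 : ((m : ℤ) + 1 - 1 + 1).toNat = m + 1 := by omega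
    have h3 : ((m : ℤ) + 1 - 2 + 1).toNat = m := by omega
    simp only [h1, h2, h3, NS.gfib_add_two]
  · intro n hn
    obtain ⟨m, rfl⟩ : ∃ m : ℕ, n = (m : ℤ) + 1 := ⟨(n - 1).toNat, by omega⟩
    have h1 : ((m : ℤ) + 1 + 1).toNat = m + 2 := by omega
    have h2 : ((m : ℤ) + 1).toNat = m + 1 := by omega
    simp only [h1, h2]
    rw [NS.Mcount_eq d (m + 1) hd (by omega)]
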